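/- Let α = Σᵢ λᵢ (φᵢ ⊗ ψᵢ) be a Schmidt decomposition (λᵢ ≥ 0 sorted in descending order, Σλᵢ² = 1, {φᵢ},{ψᵢ} orthonormal). If for all self-adjoint A on H₁ and B on H₂ one has ⟨α,(A⊗B)α⟩ = ⟨α,(A⊗I)α⟩⟨α,(I⊗B)α⟩, then λ₁ = 1 and λᵢ = 0 for i > 1; hence α = φ₁ ⊗ ψ₁ is separable. -/

import Mathlib

open scoped TensorProduct
open Finset

variable {H₁ H₂ : Type*} [NormedAddCommGroup H₁] [InnerProductSpace ℂ H₁]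
  [NormedAddCommGroup H₂] [InnerProductSpace ℂ H₂]

/-- The linear functional `x ↦ ⟪u ⊗ v, x⟫` on `H₁ ⊗ H₂`, where the inner product on the
tensor product is determined by `⟪a ⊗ b, c ⊗ d⟫ = ⟪a,c⟫⟪b,d⟫`. -/
noncomputable def braPure (u : H₁) (v : H₂) : H₁ ⊗[ℂ] H₂ →ₗ[ℂ] ℂ :=
  TensorProduct.lift ((LinearMap.mul ℂ ℂ).compl₁₂ (innerₛₗ ℂ u) (innerₛₗ ℂ v))

/-- The bra functional `⟪α, ·⟫` for `α = ∑ i, c i • (φ i ⊗ ψ i)` with real coefficients. -/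
noncomputable def braSchmidt {n : ℕ} (c : Fin n → ℝ) (φ : Fin n → H₁) (ψ : Fin n → H₂) :
    H₁ ⊗[ℂ] H₂ →ₗ[ℂ] ℂ :=
  ∑ i, (c i : ℂ) • braPure (φ i) (ψ i)

lemma braPure_tmul (u : H₁) (v : H₂) (x : H₁) (y : H₂) :
    braPure u v (x ⊗ₜ[ℂ] y) = inner ℂ u x * inner ℂ v y := rfl

theorem independence_implies_separable
    [FiniteDimensional ℂ H₁] [FiniteDimensional ℂ H₂]
    {n : ℕ} (φ : Fin (n + 1) → H₁) (ψ : Fin (n + 1) → H₂)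
    (hφ : Orthonormal ℂ φ) (hψ : Orthonormal ℂ ψ)
    (c : Fin (n + 1) → ℝ) (hc : ∀ i, 0 ≤ c i)
    (hdesc : ∀ i j : Fin (n + 1), i ≤ j → c j ≤ c i)
    (hnorm : ∑ i, (c i) ^ 2 = 1)
    (hindep : ∀ (A : H₁ →ₗ[ℂ] H₁) (B : H₂ →ₗ[ℂ] H₂),
      A.IsSymmetric → B.IsSymmetric →
      braSchmidt c φ ψ
          (TensorProduct.map A B (∑ i, (c i : ℂ) • (φ i ⊗ₜ[ℂ] ψ i))) =
        braSchmidt c φ ψ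
            (TensorProduct.map A LinearMap.id (∑ i, (c i : ℂ) • (φ i ⊗ₜ[ℂ] ψ i))) *
          braSchmidt c φ ψ
            (TensorProduct.map LinearMap.id B (∑ i, (c i : ℂ) • (φ i ⊗ₜ[ℂ] ψ i)))) :
    c 0 = 1 ∧ (∀ i : Fin (n + 1), i ≠ 0 → c i = 0) ∧
      (∑ i, (c i : ℂ) • (φ i ⊗ₜ[ℂ] ψ i)) = φ 0 ⊗ₜ[ℂ] ψ 0 := by
  classical
  set A : H₁ →ₗ[ℂ] H₁ := (innerₛₗ ℂ (φ 0)).smulRight (φ 0) with hAdef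
  set B : H₂ →ₗ[ℂ] H₂ := (innerₛₗ ℂ (ψ 0)).smulRight (ψ 0) with hBdef
  have hφij := orthonormal_iff_ite.mp hφ
  have hψij := orthonormal_iff_ite.mp hψ
  have hA : A.IsSymmetric := by
    intro x y
    simp only [hAdef, LinearMap.smulRight_apply, innerₛₗ_apply_apply, inner_smul_left,
      inner_smul_right, inner_conj_symm]
    ring
  have hB : B.IsSymmetric := by
    intro x y
    simp only [hBdef, LinearMap.smulRight_apply, innerₛₗ_apply_apply, inner_smul_left,
      inner_smul_right, inner_conj_symm]
    ring
  have hAφ : ∀ i, A (φ i) = (if 0 = i then (1 : ℂ) else 0) • φ 0 := by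
    intro i
    simp [hAdef, hφij 0 i]
  have hBψ : ∀ i, B (ψ i) = (if 0 = i then (1 : ℂ) else 0) • ψ 0 := by
    intro i
    simp [hBdef, hψij 0 i]
  have hbra0 : braSchmidt c φ ψ (φ 0 ⊗ₜ[ℂ] ψ 0) = (c 0 : ℂ) := by
    simp only [braSchmidt, LinearMap.sum_apply, LinearMap.smul_apply, braPure_tmul,
      hφij, hψij, smul_eq_mul]
    rw [Finset.sum_eq_single 0]
    · simp
    · intro b _ hb; simp [hb]
    · simp
  have eAB : TensorProduct.map A B (∑ i, (c i : ℂ) • (φ i ⊗ₜ[ℂ] ψ i))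
      = (c 0 : ℂ) • (φ 0 ⊗ₜ[ℂ] ψ 0) := by
    rw [map_sum]
    rw [Finset.sum_eq_single 0]
    · simp [TensorProduct.map_tmul, hAφ, hBψ]; rfl
    · intro b _ hb
      simp [TensorProduct.map_tmul, hAφ, hBψ, (Ne.symm hb : (0 : Fin (n+1)) ≠ b)]
    · simp
  have eAI : TensorProduct.map A LinearMap.id (∑ i, (c i : ℂ) • (φ i ⊗ₜ[ℂ] ψ i))
      = (c 0 : ℂ) • (φ 0 ⊗ₜ[ℂ] ψ 0) := by
    rw [map_sum]
    rw [Finset.sum_eq_single 0]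
    · simp [TensorProduct.map_tmul, hAφ]; rfl
    · intro b _ hb
      simp [TensorProduct.map_tmul, hAφ, (Ne.symm hb : (0 : Fin (n+1)) ≠ b)]
    · simp
  have eIB : TensorProduct.map LinearMap.id B (∑ i, (c i : ℂ) • (φ i ⊗ₜ[ℂ] ψ i))
      = (c 0 : ℂ) • (φ 0 ⊗ₜ[ℂ] ψ 0) := by
    rw [map_sum]
    rw [Finset.sum_eq_single 0]
    · simp [TensorProduct.map_tmul, hBψ]; rfl
    · intro b _ hb
      simp [TensorProduct.map_tmul, hBψ, (Ne.symm hb : (0 : Fin (n+1)) ≠ b)]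
    · simp
  have key := hindep A B hA hB
  rw [eAB, eAI, eIB] at key
  simp only [map_smul, hbra0, smul_eq_mul] at key
  -- key : c0 * c0 = (c0 * c0) * (c0 * c0)  in ℂ
  have keyR : c 0 * c 0 = (c 0 * c 0) * (c 0 * c 0) := by
    exact_mod_cast key
  clear key hindep eAB eAI eIB hA hB hAφ hBψ hbra0 hφij hψij
  have hc0ne : c 0 ≠ 0 := by
    intro h0
    have hzero : ∀ i, c i = 0 := fun i =>
      le_antisymm (h0 ▸ hdesc 0 i (Fin.zero_le i)) (hc i)
    simp [hzero] at hnorm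
  have hc0sq : c 0 ^ 2 = 1 := by
    have : (c 0 * c 0) * (1 - c 0 * c 0) = 0 := by nlinarith [keyR]
    rcases mul_eq_zero.mp this with h | h
    · exact absurd (mul_self_eq_zero.mp h) hc0ne
    · rw [sq]; linarith
  have hc0 : c 0 = 1 := by nlinarith [hc 0, hc0sq]
  have hrest : ∀ i : Fin (n + 1), i ≠ 0 → c i = 0 := by
    intro i hi
    have hsum : ∑ j ∈ Finset.univ.erase 0, (c j) ^ 2 = 0 := by
      have := Finset.add_sum_erase Finset.univ (fun j => (c j) ^ 2) (Finset.mem_univ 0)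
      rw [← this] at hnorm
      simp only [hc0, one_pow] at hnorm
      linarith
    have := (Finset.sum_eq_zero_iff_of_nonneg (fun j _ => sq_nonneg (c j))).mp hsum i
      (Finset.mem_erase.mpr ⟨hi, Finset.mem_univ i⟩)
    exact (pow_eq_zero_iff two_ne_zero).mp this
  refine ⟨hc0, hrest, ?_⟩
  rw [Finset.sum_eq_single 0]
  · simp [hc0]
  · intro b _ hb; simp [hrest b hb]
  · simp
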